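/- Let (Y,*,∘) and (K,*,∘) be digroups, φ_* : (Y,*) → Aut(K,*) and φ_∘ : (Y,∘) → Aut(K,∘) group antihomomorphisms, and Λ : Y → Sym(K) a map with Λ_1 = id_K and Λ_y(1) = 1 for all y ∈ Y. Define on Y × K the operations (y,k)+(y',k') = (y*y', (Λ_{y*y'})^{-1}(φ_{*y'}(Λ_y(k)) * Λ_{y'}(k'))) and (y,k)∘(y',k') = (y∘y', φ_{∘y'}(k) ∘ k'). Then (Y × K, +, ∘) is a digroup. -/
import Mathlib


/-- A digroup: two group structures on the same set with a common identity. -/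
structure Digroup (D : Type*) where
  mul : D → D → D
  inv : D → D
  omul : D → D → D
  oinv : D → D
  one : D
  mul_assoc : ∀ a b c, mul (mul a b) c = mul a (mul b c)
  one_mul : ∀ a, mul one a = a
  mul_one : ∀ a, mul a one = a
  inv_mul : ∀ a, mul (inv a) a = one
  mul_inv : ∀ a, mul a (inv a) = one
  omul_assoc : ∀ a b c, omul (omul a b) c = omul a (omul b c)
  one_omul : ∀ a, omul one a = a
  omul_one : ∀ a, omul a one = a
  oinv_omul : ∀ a, omul (oinv a) a = one
  omul_oinv : ∀ a, omul a (oinv a) = one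

/-- Outer semidirect product of two digroups `Y` and `K` via two group
antihomomorphisms `φ_* : (Y,*) → Aut(K,*)`, `φ_∘ : (Y,∘) → Aut(K,∘)` and a pointed
map `Λ : (Y,1) → (Sym(K), id)` with `Λ_y(1) = 1`: the operations
`(y,k)+(y',k') = (y*y', Λ_{y*y'}⁻¹(φ_{*y'}(Λ_y(k)) * Λ_{y'}(k')))` and
`(y,k)∘(y',k') = (y∘y', φ_{∘y'}(k) ∘ k')` make `Y × K` a digroup. -/
theorem stmt6 {Y K : Type*} (HY : Digroup Y) (HK : Digroup K)
    (phiS phiC : Y → K → K) (Lam : Y → Equiv.Perm K)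
    (hphiS_bij : ∀ y, Function.Bijective (phiS y))
    (hphiS_mul : ∀ y k k', phiS y (HK.mul k k') = HK.mul (phiS y k) (phiS y k'))
    (hphiS_anti : ∀ y y' k, phiS (HY.mul y y') k = phiS y' (phiS y k))
    (hphiS_one : ∀ k, phiS HY.one k = k)
    (hphiC_bij : ∀ y, Function.Bijective (phiC y))
    (hphiC_omul : ∀ y k k', phiC y (HK.omul k k') = HK.omul (phiC y k) (phiC y k'))
    (hphiC_anti : ∀ y y' k, phiC (HY.omul y y') k = phiC y' (phiC y k))
    (hphiC_one : ∀ k, phiC HY.one k = k)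
    (hLam_one : Lam HY.one = Equiv.refl K)
    (hLam_pt : ∀ y, Lam y HK.one = HK.one) :
    ∃ E : Digroup (Y × K),
      (∀ p q : Y × K, E.mul p q =
        (HY.mul p.1 q.1,
          (Lam (HY.mul p.1 q.1)).symm (HK.mul (phiS q.1 (Lam p.1 p.2)) (Lam q.1 q.2)))) ∧
      (∀ p q : Y × K, E.omul p q = (HY.omul p.1 q.1, HK.omul (phiC q.1 p.2) q.2)) ∧
      E.one = (HY.one, HK.one) := by
  classical
  -- equivalences given by the bijections
  set S : Y → K ≃ K := fun y => Equiv.ofBijective (phiS y) (hphiS_bij y) with hS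
  set T : Y → K ≃ K := fun y => Equiv.ofBijective (phiC y) (hphiC_bij y) with hT
  have hSapp : ∀ y k, S y k = phiS y k := fun _ _ => rfl
  have hTapp : ∀ y k, T y k = phiC y k := fun _ _ => rfl
  -- idempotents are the identity
  have idem : ∀ a : K, HK.mul a a = a → a = HK.one := by
    intro a h
    have h2 := congrArg (fun x => HK.mul x (HK.inv a)) h
    simpa [HK.mul_assoc, HK.mul_inv, HK.mul_one] using h2
  have oidem : ∀ a : K, HK.omul a a = a → a = HK.one := by
    intro a h
    have h2 := congrArg (fun x => HK.omul x (HK.oinv a)) h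
    simpa [HK.omul_assoc, HK.omul_oinv, HK.omul_one] using h2
  have phiS_pt : ∀ y, phiS y HK.one = HK.one := by
    intro y
    apply idem
    rw [← hphiS_mul, HK.mul_one]
  have phiC_pt : ∀ y, phiC y HK.one = HK.one := by
    intro y
    apply oidem
    rw [← hphiC_omul, HK.omul_one]
  have SsS : ∀ y a, phiS y ((S y).symm a) = a := fun y a => (S y).apply_symm_apply a
  have TsT : ∀ y a, phiC y ((T y).symm a) = a := fun y a => (T y).apply_symm_apply a
  have Ssymm_mul : ∀ y u v, (S y).symm (HK.mul u v) = HK.mul ((S y).symm u) ((S y).symm v) := by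
    intro y u v
    apply (hphiS_bij y).1
    rw [SsS, hphiS_mul, SsS, SsS]
  have Tsymm_omul : ∀ y u v, (T y).symm (HK.omul u v) = HK.omul ((T y).symm u) ((T y).symm v) := by
    intro y u v
    apply (hphiC_bij y).1
    rw [TsT, hphiC_omul, TsT, TsT]
  have Ssymm_pt : ∀ y, (S y).symm HK.one = HK.one := by
    intro y
    apply (hphiS_bij y).1
    rw [SsS, phiS_pt]
  have Tsymm_pt : ∀ y, (T y).symm HK.one = HK.one := by
    intro y
    apply (hphiC_bij y).1
    rw [TsT, phiC_pt]
  have phiS_inv : ∀ y a, phiS (HY.inv y) a = (S y).symm a := by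
    intro y a
    apply (hphiS_bij y).1
    rw [SsS, ← hphiS_anti, HY.inv_mul, hphiS_one]
  have phiC_oinv : ∀ y a, phiC (HY.oinv y) a = (T y).symm a := by
    intro y a
    apply (hphiC_bij y).1
    rw [TsT, ← hphiC_anti, HY.oinv_omul, hphiC_one]
  have Lam_symm_pt : ∀ y, (Lam y).symm HK.one = HK.one := by
    intro y
    conv_lhs => rw [← hLam_pt y]
    exact (Lam y).symm_apply_apply _
  refine ⟨{
      mul := fun p q => (HY.mul p.1 q.1,
        (Lam (HY.mul p.1 q.1)).symm (HK.mul (phiS q.1 (Lam p.1 p.2)) (Lam q.1 q.2)))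
      inv := fun p => (HY.inv p.1,
        (Lam (HY.inv p.1)).symm ((S p.1).symm (HK.inv (Lam p.1 p.2))))
      omul := fun p q => (HY.omul p.1 q.1, HK.omul (phiC q.1 p.2) q.2)
      oinv := fun p => (HY.oinv p.1, (T p.1).symm (HK.oinv p.2))
      one := (HY.one, HK.one)
      mul_assoc := ?_
      one_mul := ?_
      mul_one := ?_
      inv_mul := ?_
      mul_inv := ?_
      omul_assoc := ?_
      one_omul := ?_
      omul_one := ?_
      oinv_omul := ?_
      omul_oinv := ?_ }, fun p q => rfl, fun p q => rfl, rfl⟩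
  · rintro ⟨y1, k1⟩ ⟨y2, k2⟩ ⟨y3, k3⟩
    refine Prod.ext (HY.mul_assoc y1 y2 y3) ?_
    simp only
    rw [Equiv.apply_symm_apply, Equiv.apply_symm_apply, hphiS_mul, ← hphiS_anti,
      HY.mul_assoc, HK.mul_assoc]
  · rintro ⟨y, k⟩
    refine Prod.ext (HY.one_mul y) ?_
    simp only
    rw [hLam_one]
    simp only [Equiv.refl_apply]
    rw [phiS_pt, HK.one_mul]
    have : HY.mul HY.one y = y := HY.one_mul y
    rw [this, (Lam y).symm_apply_apply]
  · rintro ⟨y, k⟩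
    refine Prod.ext (HY.mul_one y) ?_
    simp only
    rw [hLam_one, hphiS_one]
    simp only [Equiv.refl_apply]
    rw [HK.mul_one]
    have : HY.mul y HY.one = y := HY.mul_one y
    rw [this, (Lam y).symm_apply_apply]
  · rintro ⟨y, k⟩
    refine Prod.ext (HY.inv_mul y) ?_
    simp only
    rw [Equiv.apply_symm_apply, ← hSapp, Equiv.apply_symm_apply, HK.inv_mul,
      HY.inv_mul, hLam_one]
    rfl
  · rintro ⟨y, k⟩
    refine Prod.ext (HY.mul_inv y) ?_
    simp only
    rw [Equiv.apply_symm_apply, phiS_inv, ← Ssymm_mul, HK.mul_inv, Ssymm_pt,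
      HY.mul_inv, hLam_one]
    rfl
  · rintro ⟨y1, k1⟩ ⟨y2, k2⟩ ⟨y3, k3⟩
    refine Prod.ext (HY.omul_assoc y1 y2 y3) ?_
    simp only
    rw [hphiC_omul, ← hphiC_anti, HK.omul_assoc]
  · rintro ⟨y, k⟩
    refine Prod.ext (HY.one_omul y) ?_
    simp only
    rw [phiC_pt, HK.one_omul]
  · rintro ⟨y, k⟩
    refine Prod.ext (HY.omul_one y) ?_
    simp only
    rw [hphiC_one, HK.omul_one]
  · rintro ⟨y, k⟩
    refine Prod.ext (HY.oinv_omul y) ?_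
    simp only
    rw [← hTapp, Equiv.apply_symm_apply, HK.oinv_omul]
  · rintro ⟨y, k⟩
    refine Prod.ext (HY.omul_oinv y) ?_
    simp only
    rw [phiC_oinv, ← Tsymm_omul, HK.omul_oinv, Tsymm_pt]
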